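/- The sort map commutes with the operators τ_i: for P a finite poset, Q a direct sum of chains obtained by linearly ordering each connected component of P, and sort : L(P) → L(Q) the map that sorts the elements within each connected component according to the chosen chain order, one has sort(π · τ_i) = sort(π) · τ_i for every linear extension π of P and every 1 ≤ i ≤ n-1. -/

import Mathlib

open scoped Classical
noncomputable section

/-- `π` is a linear extension of the strict order `lt` on `Fin n`. -/
def IsLinExt {n : ℕ} (lt : Fin n → Fin n → Prop) (π : Equiv.Perm (Fin n)) : Prop :=
  ∀ i j : Fin n, lt (π i) (π j) → i < j

/-- The operator `τ_i` (0-based): swap positions `i`, `i+1` if entries are incomparable. -/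
def tauOp {n : ℕ} (lt : Fin n → Fin n → Prop) (i : ℕ) (π : Equiv.Perm (Fin n)) :
    Equiv.Perm (Fin n) :=
  if h : i + 1 < n then
    if ¬ lt (π ⟨i, Nat.lt_of_succ_lt h⟩) (π ⟨i + 1, h⟩) ∧
       ¬ lt (π ⟨i + 1, h⟩) (π ⟨i, Nat.lt_of_succ_lt h⟩)
    then π * Equiv.swap ⟨i, Nat.lt_of_succ_lt h⟩ ⟨i + 1, h⟩
    else π
  else π

/-- The operator `T_{i,j}` (0-based): `τ_i τ_{i+1} ⋯ τ_{j-1}` for `i ≤ j`,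
and `τ_{i-1} ⋯ τ_j` for `i > j`, applied left to right. -/
def Tmove {n : ℕ} (lt : Fin n → Fin n → Prop) (i j : ℕ) (π : Equiv.Perm (Fin n)) :
    Equiv.Perm (Fin n) :=
  if i ≤ j then (List.range (j - i)).foldl (fun p k => tauOp lt (i + k) p) π
  else (List.range (i - j)).foldl (fun p k => tauOp lt (i - 1 - k) p) π

/-- The transition matrix of the `P`-random-to-random shuffle. -/
def Mrr {n : ℕ} (lt : Fin n → Fin n → Prop) (π π' : Equiv.Perm (Fin n)) : ℝ :=
  (Finset.univ.filter (fun p : Fin n × Fin n => π' = Tmove lt (p.1 : ℕ) (p.2 : ℕ) π)).card /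
    (n ^ 2 : ℝ)

/-- Two elements are in the same connected component of the comparability graph. -/
def InSameComp {n : ℕ} (lt : Fin n → Fin n → Prop) (x y : Fin n) : Prop :=
  Relation.ReflTransGen (fun a b => lt a b ∨ lt b a) x y

section Aux
open Equiv

lemma insc_symm {n : ℕ} {lt : Fin n → Fin n → Prop} {x y : Fin n}
    (h : InSameComp lt x y) : InSameComp lt y x :=
  (@Relation.ReflTransGen.stdSymm _ _ ⟨fun _ _ hh => hh.symm⟩).symm _ _ h

lemma insc_trans {n : ℕ} {lt : Fin n → Fin n → Prop} {x y z : Fin n}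
    (h : InSameComp lt x y) (h' : InSameComp lt y z) : InSameComp lt x z :=
  Relation.ReflTransGen.trans h h'

lemma lt_insc {n : ℕ} {lt : Fin n → Fin n → Prop} {x y : Fin n}
    (h : lt x y) : InSameComp lt x y :=
  Relation.ReflTransGen.single (Or.inl h)

/-- For an adjacent transposition, `s a < s b` implies `a < b` unless `(a,b) = (y,x)`. -/
lemma swap_lt {n i : ℕ} (h : i + 1 < n) (a b : Fin n)
    (hs : Equiv.swap (⟨i, Nat.lt_of_succ_lt h⟩ : Fin n) ⟨i + 1, h⟩ a <
          Equiv.swap (⟨i, Nat.lt_of_succ_lt h⟩ : Fin n) ⟨i + 1, h⟩ b) :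
    a < b ∨ (a = ⟨i + 1, h⟩ ∧ b = ⟨i, Nat.lt_of_succ_lt h⟩) := by
  simp only [Equiv.swap_apply_def] at hs
  simp only [Fin.lt_def, Fin.ext_iff]
  split_ifs at hs <;>
    simp only [Fin.ext_iff, Fin.lt_def] at * <;> omega

lemma tau_linext {n : ℕ} {lt : Fin n → Fin n → Prop} {π : Equiv.Perm (Fin n)}
    (hπ : IsLinExt lt π) (i : ℕ) : IsLinExt lt (tauOp lt i π) := by
  unfold tauOp
  split_ifs with h hcond
  · intro a b hab
    simp only [Equiv.Perm.mul_apply] at hab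
    have hs := hπ _ _ hab
    rcases swap_lt h a b hs with h' | ⟨rfl, rfl⟩
    · exact h'
    · exfalso
      apply hcond.1
      rwa [Equiv.swap_apply_right, Equiv.swap_apply_left] at hab
  · exact hπ
  · exact hπ

/-- Uniqueness of a `Q`-linear extension with a prescribed component word. -/
lemma unique_ext {n : ℕ} {P Q : PartialOrder (Fin n)}
    (hQchain : ∀ x y, InSameComp P.lt x y → x ≠ y → (Q.lt x y ∨ Q.lt y x))
    {σ₁ σ₂ : Equiv.Perm (Fin n)}
    (h1 : IsLinExt Q.lt σ₁) (h2 : IsLinExt Q.lt σ₂)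
    (hc : ∀ k, InSameComp P.lt (σ₁ k) (σ₂ k)) : σ₁ = σ₂ := by
  suffices h : ∀ k : ℕ, ∀ hk : k < n, σ₁ ⟨k, hk⟩ = σ₂ ⟨k, hk⟩ by
    ext k
    have := h k.val k.isLt
    simpa using congrArg Fin.val this
  intro k
  induction k using Nat.strong_induction_on with
  | _ k IH =>
    intro hk
    by_contra hne
    rcases hQchain _ _ (hc ⟨k, hk⟩) hne with hlt | hlt
    · set l := σ₂⁻¹ (σ₁ ⟨k, hk⟩) with hldef
      have hσ₂l : σ₂ l = σ₁ ⟨k, hk⟩ := Equiv.apply_symm_apply σ₂ _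
      have hlk : l < (⟨k, hk⟩ : Fin n) := h2 l ⟨k, hk⟩ (by rw [hσ₂l]; exact hlt)
      have hlval : (l : ℕ) < k := hlk
      have heq : σ₁ ⟨(l : ℕ), l.isLt⟩ = σ₂ ⟨(l : ℕ), l.isLt⟩ := IH _ hlval l.isLt
      have : σ₁ l = σ₁ ⟨k, hk⟩ := by
        rw [show l = (⟨(l : ℕ), l.isLt⟩ : Fin n) from rfl] at hσ₂l ⊢
        rw [heq, hσ₂l]
      have := σ₁.injective this
      rw [this] at hlval; omega
    · set l := σ₁⁻¹ (σ₂ ⟨k, hk⟩) with hldef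
      have hσ₁l : σ₁ l = σ₂ ⟨k, hk⟩ := Equiv.apply_symm_apply σ₁ _
      have hlk : l < (⟨k, hk⟩ : Fin n) := h1 l ⟨k, hk⟩ (by rw [hσ₁l]; exact hlt)
      have hlval : (l : ℕ) < k := hlk
      have heq : σ₁ ⟨(l : ℕ), l.isLt⟩ = σ₂ ⟨(l : ℕ), l.isLt⟩ := IH _ hlval l.isLt
      have : σ₂ l = σ₂ ⟨k, hk⟩ := by
        rw [show l = (⟨(l : ℕ), l.isLt⟩ : Fin n) from rfl] at hσ₁l ⊢
        rw [← heq, hσ₁l]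
      have := σ₂.injective this
      rw [this] at hlval; omega

end Aux

/-- the sort map from `L(P)` to `L(Q)` — where `Q` is a direct sum of chains
obtained by linearly ordering each connected component of `P`, and `sort π` is the unique
linear extension of `Q` occupying the positions of each component by the same entries as
`π`, rearranged in increasing `Q`-order — commutes with the operators `τ_i`. -/


theorem sort_commutes_tau {n : ℕ} (P Q : PartialOrder (Fin n))
    (hQext : ∀ x y, P.lt x y → Q.lt x y)
    (hQchain : ∀ x y, InSameComp P.lt x y → x ≠ y → (Q.lt x y ∨ Q.lt y x))
    (hQsep : ∀ x y, Q.lt x y → InSameComp P.lt x y)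
    (sort : Equiv.Perm (Fin n) → Equiv.Perm (Fin n))
    (hsort : ∀ π, IsLinExt P.lt π →
        IsLinExt Q.lt (sort π) ∧ ∀ k : Fin n, InSameComp P.lt (π k) (sort π k)) :
    ∀ π : Equiv.Perm (Fin n), IsLinExt P.lt π → ∀ i : ℕ, i + 1 < n →
      sort (tauOp P.lt i π) = tauOp Q.lt i (sort π) := by
  intro π hπ i hi
  obtain ⟨hQπ, hcπ⟩ := hsort π hπ
  have hτP : IsLinExt P.lt (tauOp P.lt i π) := tau_linext hπ i
  obtain ⟨hQ1, hc1⟩ := hsort _ hτP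
  set x : Fin n := ⟨i, Nat.lt_of_succ_lt hi⟩ with hx
  set y : Fin n := ⟨i + 1, hi⟩ with hy
  have hxy : x ≠ y := by simp [hx, hy, Fin.ext_iff]
  -- it suffices to show τ_Q (sort π) is a Q-lin-ext with the right component word
  apply unique_ext hQchain hQ1 (tau_linext hQπ i)
  intro k
  refine insc_trans (insc_symm (hc1 k)) ?_
  -- goal: (tauOp P.lt i π) k ∼ (tauOp Q.lt i (sort π)) k
  by_cases hsame : InSameComp P.lt (π x) (π y)
  · -- same component: Q does not swap, P may or may not swap but stays in component
    have hsxy : sort π x ≠ sort π y := fun hh => hxy ((sort π).injective hh)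
    have hsame' : InSameComp P.lt (sort π x) (sort π y) :=
      insc_trans (insc_symm (hcπ x)) (insc_trans hsame (hcπ y))
    have hQeq : tauOp Q.lt i (sort π) = sort π := by
      unfold tauOp
      rw [dif_pos hi, if_neg]
      rintro ⟨ha, hb⟩
      exact (hQchain _ _ hsame' hsxy).elim ha hb
    rw [hQeq]
    have hP : InSameComp P.lt ((tauOp P.lt i π) k) (π k) := by
      unfold tauOp
      rw [dif_pos hi]
      split_ifs with hcond
      · simp only [Equiv.Perm.mul_apply]
        by_cases hkx : k = x
        · subst hkx; rw [Equiv.swap_apply_left]; exact insc_symm hsame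
        · by_cases hky : k = y
          · subst hky; rw [Equiv.swap_apply_right]; exact hsame
          · rw [Equiv.swap_apply_of_ne_of_ne hkx hky]
            exact Relation.ReflTransGen.refl
      · exact Relation.ReflTransGen.refl
    exact insc_trans hP (hcπ k)
  · -- different components: both sides swap
    have hP1 : ¬ P.lt (π x) (π y) := fun hh => hsame (lt_insc hh)
    have hP2 : ¬ P.lt (π y) (π x) := fun hh => hsame (insc_symm (lt_insc hh))
    have hsame' : ¬ InSameComp P.lt (sort π x) (sort π y) := fun hh =>
      hsame (insc_trans (hcπ x) (insc_trans hh (insc_symm (hcπ y))))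
    have hQ1' : ¬ Q.lt (sort π x) (sort π y) := fun hh => hsame' (hQsep _ _ hh)
    have hQ2' : ¬ Q.lt (sort π y) (sort π x) := fun hh =>
      hsame' (insc_symm (hQsep _ _ hh))
    have hPeq : tauOp P.lt i π = π * Equiv.swap x y := by
      unfold tauOp; rw [dif_pos hi, if_pos ⟨hP1, hP2⟩]
    have hQeq : tauOp Q.lt i (sort π) = sort π * Equiv.swap x y := by
      unfold tauOp; rw [dif_pos hi, if_pos ⟨hQ1', hQ2'⟩]
    rw [hPeq, hQeq]
    simp only [Equiv.Perm.mul_apply]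
    exact hcπ _
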